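/- arXiv:1208.2585 — 2 statements merged into one kernel-verified Lean document; each statement's English description precedes it below -/
import Mathlib

section
/- Under the Abstract State postulate, if an algorithm computes a partial function f : Dᵏ ⇀ D and ζ is an automorphism of every input state fixing the interpretations of all static symbols, then f commutes with ζ: f(ζ(ā)) = ζ(f(ā)) whenever f(ā) is defined. -/
/-- Ground terms over a vocabulary: a type `F` of function symbols with arities `ar`. -/
inductive Term (F : Type) (ar : F → ℕ) : Type
  | app (f : F) (args : Fin (ar f) → Term F ar) : Term F ar

/-- A (first-order) structure over the vocabulary `(F, ar)` with carrier `D`. -/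
structure Struc (F : Type) (ar : F → ℕ) (D : Type) where
  interp : (f : F) → (Fin (ar f) → D) → D

/-- Evaluation of a ground term in a structure. -/
def eval {F : Type} {ar : F → ℕ} {D : Type} (X : Struc F ar D) : Term F ar → D
  | .app f args => X.interp f fun i => eval X (args i)

/-- `ζ : X ≅ Y`: a bijection of the carrier commuting with all interpretations. -/
def IsIso {F : Type} {ar : F → ℕ} {D : Type} (ζ : D ≃ D)
    (X Y : Struc F ar D) : Prop :=
  ∀ (f : F) (args : Fin (ar f) → D),
    ζ (X.interp f args) = Y.interp f fun i => ζ (args i)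

/-- Iterating a partial transition function. -/
def iterO {S : Type} (τ : S → Option S) : ℕ → S → Option S
  | 0, X => some X
  | k + 1, X => (iterO τ k X).bind τ

/-- The run from `X` reaches the terminal state `Y` after `m` steps. -/
def terminalAt {S : Type} (τ : S → Option S) (X : S) (m : ℕ) (Y : S) : Prop :=
  iterO τ m X = some Y ∧ τ Y = none

/-- The algorithm `τ` computes the partial function `f : Dᵏ ⇀ D` via input states
`input ā` and designated output term `t`: from `input ā` the run terminates with
`⟦t⟧ = f ā` when `f ā` is defined, and diverges otherwise. -/
def Computes {F : Type} {ar : F → ℕ} {D : Type} {k : ℕ}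
    (τ : Struc F ar D → Option (Struc F ar D))
    (input : (Fin k → D) → Struc F ar D) (t : Term F ar)
    (f : (Fin k → D) → Option D) : Prop :=
  ∀ a : Fin k → D,
    (∃ m Y, terminalAt τ (input a) m Y ∧ f a = some (eval Y t)) ∨
    (f a = none ∧ ∀ m Y, ¬ terminalAt τ (input a) m Y)

theorem eval_iso {F : Type} {ar : F → ℕ} {D : Type} {ζ : D ≃ D}
    {X Y : Struc F ar D} (h : IsIso ζ X Y) (t : Term F ar) :
    ζ (eval X t) = eval Y t := by
  induction t with
  | app f args ih =>
    simp only [eval, h f]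
    congr 1; funext i; exact ih i

theorem iter_iso {F : Type} {ar : F → ℕ} {D : Type}
    {τ : Struc F ar D → Option (Struc F ar D)}
    (h1 : ∀ (X Y : Struc F ar D) (ζ : D ≃ D), IsIso ζ X Y → (τ X = none ↔ τ Y = none))
    (h2 : ∀ (X Y X' Y' : Struc F ar D) (ζ : D ≃ D), IsIso ζ X Y →
      τ X = some X' → τ Y = some Y' → IsIso ζ X' Y')
    {ζ : D ≃ D} {X Y : Struc F ar D} (h : IsIso ζ X Y) :
    ∀ (m : ℕ) (X' : Struc F ar D), iterO τ m X = some X' →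
      ∃ Y', iterO τ m Y = some Y' ∧ IsIso ζ X' Y' := by
  intro m
  induction m with
  | zero => intro X' hX'; exact ⟨Y, rfl, by cases hX'; exact h⟩
  | succ n ih =>
    intro X' hX'
    simp only [iterO, Option.bind_eq_some_iff] at hX'
    obtain ⟨Z, hZ, hτZ⟩ := hX'
    obtain ⟨W, hW, hiso⟩ := ih Z hZ
    cases hτW : τ W with
    | none => exact absurd hτZ (by simp [(h1 _ _ _ hiso).mpr hτW])
    | some W' =>
      exact ⟨W', by simp [iterO, hW, hτW], h2 _ _ _ _ _ hiso hτZ hτW⟩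

theorem terminal_none {S : Type} {τ : S → Option S} {X : S} {m : ℕ} {Y : S}
    (h : terminalAt τ X m Y) : ∀ j, iterO τ (m + j + 1) X = none := by
  intro j
  induction j with
  | zero => simp [iterO, h.1, h.2]
  | succ n ih =>
    show (iterO τ (m + n + 1) X).bind τ = none
    rw [ih]; rfl

theorem terminal_unique {S : Type} {τ : S → Option S} {X : S} {m m' : ℕ} {Y Y' : S}
    (h : terminalAt τ X m Y) (h' : terminalAt τ X m' Y') : Y = Y' := by
  wlog hle : m ≤ m' generalizing m m' Y Y'
  · exact (this h' h (le_of_not_ge hle)).symm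
  rcases Nat.eq_or_lt_of_le hle with rfl | hlt
  · have := h'.1; rw [h.1] at this; exact Option.some.inj this
  · obtain ⟨j, rfl⟩ := Nat.exists_eq_add_of_lt hlt
    have := terminal_none h j
    rw [h'.1] at this; cases this
/-- under the Abstract State postulate, if an algorithm computes a partial
function `f : Dᵏ ⇀ D` and `ζ` is an automorphism carrying each input state for `ā` to
the input state for `ζ(ā)`, then `f` commutes with `ζ`: `f(ζ(ā)) = ζ(f(ā))` whenever
`f(ā)` is defined. -/
theorem computed_function_commutes_with_automorphism {F : Type} {ar : F → ℕ}
    {D : Type} {k : ℕ}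
    (τ : Struc F ar D → Option (Struc F ar D))
    (h1 : ∀ (X Y : Struc F ar D) (ζ : D ≃ D), IsIso ζ X Y → (τ X = none ↔ τ Y = none))
    (h2 : ∀ (X Y X' Y' : Struc F ar D) (ζ : D ≃ D), IsIso ζ X Y →
      τ X = some X' → τ Y = some Y' → IsIso ζ X' Y')
    (input : (Fin k → D) → Struc F ar D) (t : Term F ar)
    (f : (Fin k → D) → Option D) (hc : Computes τ input t f)
    (ζ : D ≃ D) (hζ : ∀ a : Fin k → D, IsIso ζ (input a) (input fun x => ζ (a x))) :
    ∀ (a : Fin k → D) (d : D), f a = some d → f (fun x => ζ (a x)) = some (ζ d) := by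
  intro a d hd
  rcases hc a with ⟨m, Y, hter, hfa⟩ | ⟨hnone, _⟩
  · obtain ⟨Y', hY', hiso⟩ := iter_iso h1 h2 (hζ a) m Y hter.1
    have hterY' : terminalAt τ (input fun x => ζ (a x)) m Y' :=
      ⟨hY', (h1 _ _ _ hiso).mp hter.2⟩
    rcases hc (fun x => ζ (a x)) with ⟨m₂, Z, hterZ, hfz⟩ | ⟨_, hdiv⟩
    · have hZY' : Z = Y' := terminal_unique hterZ hterY'
      rw [hfz, hZY', ← eval_iso hiso]
      rw [hd] at hfa
      rw [Option.some.inj hfa]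
    · exact absurd hterY' (hdiv m Y')
  · rw [hnone] at hd; cases hd
end

section
/- Δ⁺ is compositional and monotone for parallel composition: Δ⁺ of do {P₁ … Pₙ} in any state X equals the union of the Δ⁺_{Pᵢ}(X), and consequently if each Δ⁺_{Pᵢ}(X) is clash-free and the Pᵢ update pairwise disjoint sets of locations in X, then the combined update set is clash-free and the resulting next state agrees with the next state of each Pᵢ on the locations that Pᵢ updates. -/
/-- Propositional combinations of equalities between ground terms. -/
inductive Cond (F : Type) (ar : F → ℕ) : Type
  | eq (s t : Term F ar)
  | not (c : Cond F ar)
  | and (c d : Cond F ar)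
  | or (c d : Cond F ar)

/-- Truth of a condition in a structure. -/
def condHolds {F : Type} {ar : F → ℕ} {D : Type} (X : Struc F ar D) : Cond F ar → Prop
  | .eq s t => eval X s = eval X t
  | .not c => ¬ condHolds X c
  | .and c d => condHolds X c ∧ condHolds X d
  | .or c d => condHolds X c ∨ condHolds X d

/-- ASM programs: assignments `f(s₁,…,sₙ) := t`, conditionals, and parallel composition. -/
inductive Prog (F : Type) (ar : F → ℕ) : Type
  | skip
  | assign (f : F) (args : Fin (ar f) → Term F ar) (rhs : Term F ar)
  | cond (c : Cond F ar) (thn els : Prog F ar)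
  | par (ps : List (Prog F ar))

/-- A location `f(ā)` in a structure with carrier `D`. -/
def Loc (F : Type) (ar : F → ℕ) (D : Type) : Type := Σ f : F, Fin (ar f) → D

open Classical in
/-- The proposed update set Δ⁺_P(X): a singleton for an assignment, the update set of
the selected branch for a conditional, and the union for parallel composition. -/
noncomputable def deltaPlus {F : Type} {ar : F → ℕ} {D : Type} :
    Prog F ar → Struc F ar D → Set (Loc F ar D × D)
  | .skip, _ => ∅
  | .assign f args rhs, X => {(⟨f, fun i => eval X (args i)⟩, eval X rhs)}
  | .cond c p q, X => if condHolds X c then deltaPlus p X else deltaPlus q X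
  | .par ps, X => ⋃ p ∈ ps, deltaPlus p X

/-- An update set is clash-free if no two of its updates share a location but differ in value. -/
def clashFree {F : Type} {ar : F → ℕ} {D : Type} (Δ : Set (Loc F ar D × D)) : Prop :=
  ∀ (l : Loc F ar D) (b b' : D), (l, b) ∈ Δ → (l, b') ∈ Δ → b = b'

/-- The graph of a structure, viewed as the set of its location–value points `f(ā) ↦ b`. -/
def graph {F : Type} {ar : F → ℕ} {D : Type} (X : Struc F ar D) : Set (Loc F ar D × D) :=
  {p | X.interp p.1.1 p.1.2 = p.2}

/-- The (non-trivial) update set Δ_P(X) = Δ⁺_P(X) \ X. -/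
noncomputable def Delta {F : Type} {ar : F → ℕ} {D : Type}
    (P : Prog F ar) (X : Struc F ar D) : Set (Loc F ar D × D) :=
  deltaPlus P X \ graph X

open Classical in
/-- Applying an update set to a structure: updated locations get their new value,
all other locations keep their old value. -/
noncomputable def applyUpd {F : Type} {ar : F → ℕ} {D : Type}
    (Δ : Set (Loc F ar D × D)) (X : Struc F ar D) : Struc F ar D :=
  ⟨fun f args => if h : ∃ b, (⟨f, args⟩, b) ∈ Δ then h.choose else X.interp f args⟩

/-- The next state τ_P(X), obtained by applying the non-trivial updates Δ_P(X) to `X`. -/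
noncomputable def tau {F : Type} {ar : F → ℕ} {D : Type}
    (P : Prog F ar) (X : Struc F ar D) : Struc F ar D :=
  applyUpd (Delta P X) X

/-- The set of locations updated by an update set. -/
def locs {F : Type} {ar : F → ℕ} {D : Type} (Δ : Set (Loc F ar D × D)) : Set (Loc F ar D) :=
  {l | ∃ b, (l, b) ∈ Δ}

/-- Δ⁺ is compositional for parallel composition: Δ⁺ of `do {P₁ … Pₙ}`
in any state equals the union of the Δ⁺_{Pᵢ}; consequently, if each Δ⁺_{Pᵢ}(X) is
clash-free and the `Pᵢ` update pairwise disjoint sets of locations, then the combined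
update set is clash-free and the next state of the parallel composition agrees with
the next state of each `Pᵢ` on the locations that `Pᵢ` updates. -/
theorem deltaPlus_par {F : Type} {ar : F → ℕ} {D : Type}
    (ps : List (Prog F ar)) (X : Struc F ar D) :
    deltaPlus (Prog.par ps) X = (⋃ p ∈ ps, deltaPlus p X) ∧
    ((∀ p ∈ ps, clashFree (deltaPlus p X)) →
      ps.Pairwise (fun p q => Disjoint (locs (deltaPlus p X)) (locs (deltaPlus q X))) →
      clashFree (deltaPlus (Prog.par ps) X) ∧
      ∀ p ∈ ps, ∀ (f : F) (a : Fin (ar f) → D),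
        (⟨f, a⟩ : Loc F ar D) ∈ locs (deltaPlus p X) →
        (tau (Prog.par ps) X).interp f a = (tau p X).interp f a) := by
  constructor
  · simp only [deltaPlus]
  intro hcf hdisj
  have hdisj' : ∀ p ∈ ps, ∀ q ∈ ps, p ≠ q →
      Disjoint (locs (deltaPlus p X)) (locs (deltaPlus q X)) :=
    haveI : Std.Symm (fun p q : Prog F ar => Disjoint (locs (deltaPlus p X)) (locs (deltaPlus q X))) :=
      ⟨fun _ _ h => h.symm⟩
    List.Pairwise.forall hdisj
  have hCF : clashFree (deltaPlus (Prog.par ps) X) := by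
    intro l b b' hb hb'
    simp only [deltaPlus, Set.mem_iUnion] at hb hb'
    obtain ⟨p, hp, hbp⟩ := hb
    obtain ⟨q, hq, hbq⟩ := hb'
    by_cases hpq : p = q
    · subst hpq; exact hcf p hp l b b' hbp hbq
    · have h1 : l ∈ locs (deltaPlus p X) := ⟨b, hbp⟩
      have h2 : l ∈ locs (deltaPlus q X) := ⟨b', hbq⟩
      exact absurd (Set.not_disjoint_iff.mpr ⟨l, h1, h2⟩)
        (fun h => h (hdisj' p hp q hq hpq))
  refine ⟨hCF, ?_⟩
  intro p hp f a hl
  obtain ⟨b, hb⟩ := hl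
  have hmem : ∀ c, ((⟨f, a⟩ : Loc F ar D), c) ∈ deltaPlus (Prog.par ps) X ↔
      ((⟨f, a⟩ : Loc F ar D), c) ∈ deltaPlus p X := by
    intro c
    constructor
    · intro h
      erw [deltaPlus, Set.mem_iUnion₂] at h
      obtain ⟨q, hq, hcq⟩ := h
      by_cases hpq : p = q
      · subst hpq; exact hcq
      · have h1 : (⟨f, a⟩ : Loc F ar D) ∈ locs (deltaPlus p X) := ⟨b, hb⟩
        have h2 : (⟨f, a⟩ : Loc F ar D) ∈ locs (deltaPlus q X) := ⟨c, hcq⟩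
        exact absurd (Set.not_disjoint_iff.mpr ⟨⟨f, a⟩, h1, h2⟩)
          (fun h => h (hdisj' p hp q hq hpq))
    · intro h
      erw [deltaPlus, Set.mem_iUnion₂]
      exact ⟨p, hp, h⟩
  have hmemD : ∀ c, ((⟨f, a⟩ : Loc F ar D), c) ∈ Delta (Prog.par ps) X ↔
      ((⟨f, a⟩ : Loc F ar D), c) ∈ Delta p X := by
    intro c
    exact and_congr (hmem c) Iff.rfl
  simp only [tau, applyUpd]
  by_cases h : ∃ c, ((⟨f, a⟩ : Loc F ar D), c) ∈ Delta (Prog.par ps) X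
  · have h' : ∃ c, ((⟨f, a⟩ : Loc F ar D), c) ∈ Delta p X :=
      ⟨h.choose, (hmemD _).1 h.choose_spec⟩
    erw [dif_pos h, dif_pos h']
    exact hCF ⟨f, a⟩ _ _ h.choose_spec.1 ((hmemD _).2 h'.choose_spec).1
  · have h' : ¬ ∃ c, ((⟨f, a⟩ : Loc F ar D), c) ∈ Delta p X :=
      fun ⟨c, hc⟩ => h ⟨c, (hmemD c).2 hc⟩
    erw [dif_neg h, dif_neg h']
end
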